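/- Let V be a set with binary relations s and R, a distinguished element 0, and element max, satisfying: (A1) ∀x. ¬s(x,0) ∧ ¬s(max,x) ∧ (x ≠ 0 → ∃y. s(y,x)) ∧ (x ≠ max → ∃y. s(x,y)); (A2) s is both functional and injective; (A3) ∀x. R(0,x) ∧ R(x,max); together with T1[s] and the induction principle for R. Then s is acyclic with respect to R: for all x, y, if s(x,y) then ¬R(y,x). -/
import Mathlib


theorem stmt_14 {V : Type*} (s R : V → V → Prop) (zero max : V)
    (hA1 : ∀ x : V, ¬ s x zero ∧ ¬ s max x ∧
      (x ≠ zero → ∃ y, s y x) ∧ (x ≠ max → ∃ y, s x y))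
    (hA2 : ∀ x y z : V, ((s x y ∧ s x z) ∨ (s y x ∧ s z x)) → y = z)
    (hA3 : ∀ x : V, R zero x ∧ R x max)
    (hT1 : ∀ u v : V, R u v ↔ (u = v ∨ ∃ w, s u w ∧ R w v))
    (hInd : ∀ (P : V → Prop) (z : V),
      (P z ∧ ∀ u v, P u → s u v → P v) → ∀ u, R z u → P u) :
    ∀ x y : V, s x y → ¬ R y x := by
  intro x y hsxy hRyx
  have hrefl : ∀ u, R u u := fun u => (hT1 u u).mpr (Or.inl rfl)
  have front : ∀ u v w, s u w → R w v → R u v := fun u v w h1 h2 =>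
    (hT1 u v).mpr (Or.inr ⟨w, h1, h2⟩)
  have htrans : ∀ a b c, R a b → R b c → R a c := by
    intro a b c hab hbc
    exact hInd (fun u => ∀ c, R u c → R a c) a
      ⟨fun c h => h, fun u v hu hsuv c hvc => hu c (front u c v hsuv hvc)⟩ b hab c hbc
  have lemZ : ∀ v, R v zero → v = zero := by
    intro v hv
    exact hInd (fun u => u = zero → v = zero) v
      ⟨fun h => h, fun u w hu hsu hw => absurd (hw ▸ hsu) (hA1 u).1⟩ zero hv rfl
  have lemB : ∀ a v, R a v → a = v ∨ ∃ w, R a w ∧ s w v := by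
    intro a v hav
    refine hInd (fun u => a = u ∨ ∃ w, R a w ∧ s w u) a ⟨Or.inl rfl, ?_⟩ v hav
    intro u v' hu hsuv
    refine Or.inr ⟨u, ?_, hsuv⟩
    rcases hu with h | ⟨w, hRaw, hswu⟩
    · exact h ▸ hrefl a
    · exact htrans a w u hRaw (front w u u hswu (hrefl u))
  have hyz : y ≠ zero := fun h => (hA1 x).1 (h ▸ hsxy)
  have key : ¬ (R y x ∧ R x x) := by
    refine hInd (fun u => ¬ (R y u ∧ R u x)) zero ⟨?_, ?_⟩ x (hA3 x).1
    · rintro ⟨h1, _⟩; exact hyz (lemZ y h1)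
    · rintro u v hu hsuv ⟨hyv, hvx⟩
      have hRux : R u x := front u x v hsuv hvx
      rcases lemB y v hyv with h | ⟨w, hRyw, hswv⟩
      · have hux : u = x := hA2 y u x (Or.inr ⟨h ▸ hsuv, hsxy⟩)
        exact hu ⟨hux ▸ hRyx, hRux⟩
      · have hwu : w = u := hA2 v w u (Or.inr ⟨hswv, hsuv⟩)
        exact hu ⟨hwu ▸ hRyw, hRux⟩
  exact key ⟨hRyx, hrefl x⟩
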